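/- Let n ≥ 1, α > -n, μ a finite positive Borel measure on the unit sphere S ⊂ ℂⁿ, and u(z) = ∫_S (1-|z|²)^(n+2α)/|1 - z·ζ̄|^(2n+2α) dμ(ζ) for z in the open unit ball of ℂⁿ. Then for every unit vector ζ, r ↦ ((1-r)^n/(1+r)^(n+2α)) · u(rζ) is decreasing and r ↦ ((1+r)^n/(1-r)^(n+2α)) · u(rζ) is increasing on [0,1). -/

import Mathlib

noncomputable instance (n : ℕ) : MeasurableSpace (EuclideanSpace ℂ (Fin n)) := borel _
instance (n : ℕ) : BorelSpace (EuclideanSpace ℂ (Fin n)) := ⟨rfl⟩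

open MeasureTheory

private lemma sq_abs_one_sub_mul (r : ℝ) (w : ℂ) :
    (‖1 - (r : ℂ) * w‖) ^ 2 = (1 - r * w.re) ^ 2 + (r * w.im) ^ 2 := by
  rw [Complex.sq_norm, Complex.normSq_apply]
  simp [Complex.sub_re, Complex.sub_im, Complex.mul_re, Complex.mul_im]
  ring

private lemma abs_one_sub_mul_pos {r : ℝ} {w : ℂ} (hr0 : 0 ≤ r) (hr1 : r < 1)
    (hw : ‖w‖ ≤ 1) : 1 - r ≤ ‖1 - (r : ℂ) * w‖ := by
  have h : ‖(1 : ℂ)‖ - ‖(r : ℂ) * w‖ ≤ ‖1 - (r : ℂ) * w‖ := norm_sub_norm_le _ _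
  have h2 : ‖(r : ℂ) * w‖ = r * ‖w‖ := by
    rw [norm_mul, Complex.norm_real, Real.norm_eq_abs, abs_of_nonneg hr0]
  have h3 : r * ‖w‖ ≤ r := by
    nlinarith [norm_nonneg w]
  rw [norm_one, h2] at h
  linarith

/-- The decreasing comparison: `(1-s)·|1-rw| ≤ (1-r)·|1-sw|`. -/
private lemma abs_ineq_dec {r s : ℝ} {w : ℂ} (hr0 : 0 ≤ r) (hrs : r ≤ s) (hs1 : s < 1)
    (hw : ‖w‖ ≤ 1) :
    (1 - s) * ‖1 - (r : ℂ) * w‖ ≤ (1 - r) * ‖1 - (s : ℂ) * w‖ := by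
  have hwsq : w.re ^ 2 + w.im ^ 2 ≤ 1 := by
    have := Complex.sq_norm w
    rw [Complex.normSq_apply] at this
    nlinarith [norm_nonneg w]
  have hb : w.re ≤ 1 := by nlinarith [sq_nonneg (w.re - 1), sq_nonneg w.im]
  have h1 : 0 ≤ (1 - s) * ‖1 - (r : ℂ) * w‖ :=
    mul_nonneg (by linarith) (norm_nonneg _)
  have h2 : 0 ≤ (1 - r) * ‖1 - (s : ℂ) * w‖ :=
    mul_nonneg (by linarith) (norm_nonneg _)
  rw [← pow_le_pow_iff_left₀ h1 h2 two_ne_zero]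
  have er : (‖1 - (r : ℂ) * w‖) ^ 2 = (1 - r * w.re) ^ 2 + (r * w.im) ^ 2 :=
    sq_abs_one_sub_mul r w
  have es : (‖1 - (s : ℂ) * w‖) ^ 2 = (1 - s * w.re) ^ 2 + (s * w.im) ^ 2 :=
    sq_abs_one_sub_mul s w
  rw [mul_pow, mul_pow, er, es]
  nlinarith [mul_nonneg (mul_nonneg (mul_nonneg (sub_nonneg.2 hrs) (by linarith : (0:ℝ) ≤ 1 - r))
      (by linarith : (0:ℝ) ≤ 1 - s)) (by linarith : (0:ℝ) ≤ 1 - w.re),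
    mul_nonneg (mul_nonneg (sub_nonneg.2 hrs)
      (by nlinarith : (0:ℝ) ≤ r * (1 - s) + s * (1 - r)))
      (by nlinarith [sq_nonneg (1 - w.re), sq_nonneg w.im] :
        (0:ℝ) ≤ (1 - w.re) ^ 2 + w.im ^ 2)]

/-- The increasing comparison: `(1+r)·|1-sw| ≤ (1+s)·|1-rw|`. -/
private lemma abs_ineq_inc {r s : ℝ} {w : ℂ} (hr0 : 0 ≤ r) (hrs : r ≤ s) (hs1 : s < 1)
    (hw : ‖w‖ ≤ 1) :
    (1 + r) * ‖1 - (s : ℂ) * w‖ ≤ (1 + s) * ‖1 - (r : ℂ) * w‖ := by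
  have hwsq : w.re ^ 2 + w.im ^ 2 ≤ 1 := by
    have := Complex.sq_norm w
    rw [Complex.normSq_apply] at this
    nlinarith [norm_nonneg w]
  have hb : -1 ≤ w.re := by nlinarith [sq_nonneg (w.re + 1), sq_nonneg w.im]
  have h1 : 0 ≤ (1 + r) * ‖1 - (s : ℂ) * w‖ :=
    mul_nonneg (by linarith) (norm_nonneg _)
  have h2 : 0 ≤ (1 + s) * ‖1 - (r : ℂ) * w‖ :=
    mul_nonneg (by linarith) (norm_nonneg _)
  rw [← pow_le_pow_iff_left₀ h1 h2 two_ne_zero]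
  have er : (‖1 - (r : ℂ) * w‖) ^ 2 = (1 - r * w.re) ^ 2 + (r * w.im) ^ 2 :=
    sq_abs_one_sub_mul r w
  have es : (‖1 - (s : ℂ) * w‖) ^ 2 = (1 - s * w.re) ^ 2 + (s * w.im) ^ 2 :=
    sq_abs_one_sub_mul s w
  rw [mul_pow, mul_pow, er, es]
  nlinarith [mul_nonneg (mul_nonneg (sub_nonneg.2 hrs)
      (by nlinarith : (0:ℝ) ≤ 1 - r * s)) (by linarith : (0:ℝ) ≤ 1 + w.re),
    mul_nonneg (mul_nonneg (sub_nonneg.2 hrs)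
      (by nlinarith : (0:ℝ) ≤ r + s + 2 * (r * s)))
      (by linarith : (0:ℝ) ≤ 1 - (w.re ^ 2 + w.im ^ 2))]

/-- Algebraic rewriting of the weighted kernel, decreasing version. -/
private lemma factor_dec (n : ℕ) (a : ℝ) {r A : ℝ} (hr0 : 0 ≤ r) (hr1 : r < 1) (hA : 0 < A) :
    (1 - r) ^ (n : ℝ) / (1 + r) ^ ((n : ℝ) + 2 * a) *
      ((1 - r ^ 2) ^ ((n : ℝ) + 2 * a) / A ^ (2 * (n : ℝ) + 2 * a)) =
    ((1 - r) / A) ^ (2 * (n : ℝ) + 2 * a) := by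
  have h1 : (0:ℝ) < 1 - r := by linarith
  have h2 : (0:ℝ) < 1 + r := by linarith
  have e1 : ((1 - r) / A) ^ (2 * (n : ℝ) + 2 * a)
      = (1 - r) ^ (2 * (n : ℝ) + 2 * a) / A ^ (2 * (n : ℝ) + 2 * a) :=
    Real.div_rpow h1.le hA.le _
  have e2 : (1 - r) ^ (2 * (n : ℝ) + 2 * a)
      = (1 - r) ^ (n : ℝ) * (1 - r) ^ ((n : ℝ) + 2 * a) := by
    rw [show (2 * (n : ℝ) + 2 * a) = (n : ℝ) + ((n : ℝ) + 2 * a) by ring, Real.rpow_add h1]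
  have e3 : (1 - r ^ 2 : ℝ) ^ ((n : ℝ) + 2 * a)
      = (1 - r) ^ ((n : ℝ) + 2 * a) * (1 + r) ^ ((n : ℝ) + 2 * a) := by
    rw [show (1 - r ^ 2 : ℝ) = (1 - r) * (1 + r) by ring, Real.mul_rpow h1.le h2.le]
  have hp2 : (0:ℝ) < (1 + r) ^ ((n : ℝ) + 2 * a) := Real.rpow_pos_of_pos h2 _
  have hpA : (0:ℝ) < A ^ (2 * (n : ℝ) + 2 * a) := Real.rpow_pos_of_pos hA _
  rw [e1, e2, e3]
  field_simp

/-- Algebraic rewriting of the weighted kernel, increasing version. -/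
private lemma factor_inc (n : ℕ) (a : ℝ) {r A : ℝ} (hr0 : 0 ≤ r) (hr1 : r < 1) (hA : 0 < A) :
    (1 + r) ^ (n : ℝ) / (1 - r) ^ ((n : ℝ) + 2 * a) *
      ((1 - r ^ 2) ^ ((n : ℝ) + 2 * a) / A ^ (2 * (n : ℝ) + 2 * a)) =
    ((1 + r) / A) ^ (2 * (n : ℝ) + 2 * a) := by
  have h1 : (0:ℝ) < 1 - r := by linarith
  have h2 : (0:ℝ) < 1 + r := by linarith
  have e1 : ((1 + r) / A) ^ (2 * (n : ℝ) + 2 * a)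
      = (1 + r) ^ (2 * (n : ℝ) + 2 * a) / A ^ (2 * (n : ℝ) + 2 * a) :=
    Real.div_rpow h2.le hA.le _
  have e2 : (1 + r) ^ (2 * (n : ℝ) + 2 * a)
      = (1 + r) ^ (n : ℝ) * (1 + r) ^ ((n : ℝ) + 2 * a) := by
    rw [show (2 * (n : ℝ) + 2 * a) = (n : ℝ) + ((n : ℝ) + 2 * a) by ring, Real.rpow_add h2]
  have e3 : (1 - r ^ 2 : ℝ) ^ ((n : ℝ) + 2 * a)
      = (1 - r) ^ ((n : ℝ) + 2 * a) * (1 + r) ^ ((n : ℝ) + 2 * a) := by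
    rw [show (1 - r ^ 2 : ℝ) = (1 - r) * (1 + r) by ring, Real.mul_rpow h1.le h2.le]
  have hp1 : (0:ℝ) < (1 - r) ^ ((n : ℝ) + 2 * a) := Real.rpow_pos_of_pos h1 _
  have hpA : (0:ℝ) < A ^ (2 * (n : ℝ) + 2 * a) := Real.rpow_pos_of_pos hA _
  rw [e1, e2, e3]
  field_simp

theorem stmt18 (n : ℕ) (hn : 1 ≤ n) (a : ℝ) (ha : -(n : ℝ) < a)
    (μ : MeasureTheory.Measure (Metric.sphere (0 : EuclideanSpace ℂ (Fin n)) 1))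
    [MeasureTheory.IsFiniteMeasure μ]
    (u : EuclideanSpace ℂ (Fin n) → ℝ)
    (hu : ∀ z, ‖z‖ < 1 →
      u z = ∫ ξ, (1 - ‖z‖ ^ 2) ^ ((n : ℝ) + 2 * a) /
        ‖(1 - inner (𝕜 := ℂ) (ξ : EuclideanSpace ℂ (Fin n)) z)‖ ^ (2 * (n : ℝ) + 2 * a) ∂μ)
    (ζ : EuclideanSpace ℂ (Fin n)) (hζ : ‖ζ‖ = 1) :
    AntitoneOn (fun r : ℝ => (1 - r) ^ (n : ℝ) / (1 + r) ^ ((n : ℝ) + 2 * a) * u (r • ζ))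
      (Set.Ico (0:ℝ) 1) ∧
    MonotoneOn (fun r : ℝ => (1 + r) ^ (n : ℝ) / (1 - r) ^ ((n : ℝ) + 2 * a) * u (r • ζ))
      (Set.Ico (0:ℝ) 1) := by
  set t : ℝ := 2 * (n : ℝ) + 2 * a with ht_def
  have ht0 : 0 ≤ t := by
    have : (1:ℝ) ≤ (n:ℝ) := by exact_mod_cast hn
    simp only [ht_def]; linarith
  set w : Metric.sphere (0 : EuclideanSpace ℂ (Fin n)) 1 → ℂ :=
    fun ξ => inner (𝕜 := ℂ) (ξ : EuclideanSpace ℂ (Fin n)) ζ with hw_def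
  have hwle : ∀ ξ, ‖w ξ‖ ≤ 1 := by
    intro ξ
    have h := norm_inner_le_norm (𝕜 := ℂ) (ξ : EuclideanSpace ℂ (Fin n)) ζ
    have hξ : ‖(ξ : EuclideanSpace ℂ (Fin n))‖ = 1 := by
      simpa using mem_sphere_zero_iff_norm.mp ξ.2
    rw [hξ, hζ] at h
    simpa using h
  have hwcont : Continuous w := Continuous.inner continuous_subtype_val continuous_const
  -- basic facts for r ∈ [0,1)
  have habs_lb : ∀ {r : ℝ}, 0 ≤ r → r < 1 → ∀ ξ,
      1 - r ≤ ‖1 - (r : ℂ) * w ξ‖ := fun hr0 hr1 ξ =>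
    abs_one_sub_mul_pos hr0 hr1 (hwle ξ)
  have habs_pos : ∀ {r : ℝ}, 0 ≤ r → r < 1 → ∀ ξ,
      (0:ℝ) < ‖1 - (r : ℂ) * w ξ‖ := by
    intro r hr0 hr1 ξ
    have := habs_lb hr0 hr1 ξ
    linarith
  have hnorm : ∀ {r : ℝ}, 0 ≤ r → ‖r • ζ‖ = r := by
    intro r hr0
    rw [norm_smul, Real.norm_eq_abs, abs_of_nonneg hr0, hζ, mul_one]
  have hinner : ∀ (r : ℝ) (ξ : Metric.sphere (0 : EuclideanSpace ℂ (Fin n)) 1),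
      inner (𝕜 := ℂ) (ξ : EuclideanSpace ℂ (Fin n)) (r • ζ) = (r : ℂ) * w ξ := by
    intro r ξ
    rw [← Complex.coe_smul, inner_smul_right]
  -- the two families of integrands
  set F : ℝ → Metric.sphere (0 : EuclideanSpace ℂ (Fin n)) 1 → ℝ :=
    fun r ξ => ((1 - r) / ‖1 - (r : ℂ) * w ξ‖) ^ t with hF_def
  set G : ℝ → Metric.sphere (0 : EuclideanSpace ℂ (Fin n)) 1 → ℝ :=
    fun r ξ => ((1 + r) / ‖1 - (r : ℂ) * w ξ‖) ^ t with hG_def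
  have habscont : ∀ r : ℝ, Continuous fun ξ => ‖1 - (r : ℂ) * w ξ‖ :=
    fun r => continuous_norm.comp (continuous_const.sub (continuous_const.mul hwcont))
  have hFcont : ∀ {r : ℝ}, 0 ≤ r → r < 1 → Continuous (F r) := by
    intro r hr0 hr1
    exact (continuous_const.div (habscont r) fun ξ => (habs_pos hr0 hr1 ξ).ne').rpow_const
      fun ξ => Or.inr ht0
  have hGcont : ∀ {r : ℝ}, 0 ≤ r → r < 1 → Continuous (G r) := by
    intro r hr0 hr1
    exact (continuous_const.div (habscont r) fun ξ => (habs_pos hr0 hr1 ξ).ne').rpow_const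
      fun ξ => Or.inr ht0
  have hFint : ∀ {r : ℝ}, 0 ≤ r → r < 1 → Integrable (F r) μ := by
    intro r hr0 hr1
    refine (integrable_const (1:ℝ)).mono' ((hFcont hr0 hr1).aestronglyMeasurable)
      (Filter.Eventually.of_forall fun ξ => ?_)
    have hnn : (0:ℝ) ≤ (1 - r) / ‖1 - (r : ℂ) * w ξ‖ :=
      div_nonneg (by linarith) (norm_nonneg _)
    have hle1 : (1 - r) / ‖1 - (r : ℂ) * w ξ‖ ≤ 1 := by
      rw [div_le_one (habs_pos hr0 hr1 ξ)]
      exact habs_lb hr0 hr1 ξ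
    rw [Real.norm_of_nonneg (Real.rpow_nonneg hnn _)]
    calc ((1 - r) / ‖1 - (r : ℂ) * w ξ‖) ^ t ≤ 1 ^ t :=
          Real.rpow_le_rpow hnn hle1 ht0
      _ = 1 := Real.one_rpow t
  have hGint : ∀ {r : ℝ}, 0 ≤ r → r < 1 → Integrable (G r) μ := by
    intro r hr0 hr1
    refine (integrable_const (((1 + r) / (1 - r)) ^ t)).mono'
      ((hGcont hr0 hr1).aestronglyMeasurable)
      (Filter.Eventually.of_forall fun ξ => ?_)
    have hnn : (0:ℝ) ≤ (1 + r) / ‖1 - (r : ℂ) * w ξ‖ :=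
      div_nonneg (by linarith) (norm_nonneg _)
    have hle1 : (1 + r) / ‖1 - (r : ℂ) * w ξ‖ ≤ (1 + r) / (1 - r) :=
      div_le_div_of_nonneg_left (by linarith) (by linarith) (habs_lb hr0 hr1 ξ)
    rw [Real.norm_of_nonneg (Real.rpow_nonneg hnn _)]
    exact Real.rpow_le_rpow hnn hle1 ht0
  -- integral representations
  have hFrep : ∀ {r : ℝ}, 0 ≤ r → r < 1 →
      (1 - r) ^ (n : ℝ) / (1 + r) ^ ((n : ℝ) + 2 * a) * u (r • ζ) = ∫ ξ, F r ξ ∂μ := by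
    intro r hr0 hr1
    rw [hu (r • ζ) (by rw [hnorm hr0]; exact hr1), ← integral_const_mul]
    refine integral_congr_ae (Filter.Eventually.of_forall fun ξ => ?_)
    simp only [hnorm hr0, hinner r ξ, hF_def]
    exact factor_dec n a hr0 hr1 (habs_pos hr0 hr1 ξ)
  have hGrep : ∀ {r : ℝ}, 0 ≤ r → r < 1 →
      (1 + r) ^ (n : ℝ) / (1 - r) ^ ((n : ℝ) + 2 * a) * u (r • ζ) = ∫ ξ, G r ξ ∂μ := by
    intro r hr0 hr1
    rw [hu (r • ζ) (by rw [hnorm hr0]; exact hr1), ← integral_const_mul]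
    refine integral_congr_ae (Filter.Eventually.of_forall fun ξ => ?_)
    simp only [hnorm hr0, hinner r ξ, hG_def]
    exact factor_inc n a hr0 hr1 (habs_pos hr0 hr1 ξ)
  constructor
  · intro r hr s hs hrs
    obtain ⟨hr0, hr1⟩ := hr
    obtain ⟨hs0, hs1⟩ := hs
    simp only
    rw [hFrep hr0 hr1, hFrep hs0 hs1]
    refine integral_mono (hFint hs0 hs1) (hFint hr0 hr1) fun ξ => ?_
    simp only [hF_def]
    refine Real.rpow_le_rpow (div_nonneg (by linarith) (norm_nonneg _)) ?_ ht0
    rw [div_le_div_iff₀ (habs_pos hs0 hs1 ξ) (habs_pos hr0 hr1 ξ)]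
    exact abs_ineq_dec hr0 hrs hs1 (hwle ξ)
  · intro r hr s hs hrs
    obtain ⟨hr0, hr1⟩ := hr
    obtain ⟨hs0, hs1⟩ := hs
    simp only
    rw [hGrep hr0 hr1, hGrep hs0 hs1]
    refine integral_mono (hGint hr0 hr1) (hGint hs0 hs1) fun ξ => ?_
    simp only [hG_def]
    refine Real.rpow_le_rpow (div_nonneg (by linarith) (norm_nonneg _)) ?_ ht0
    rw [div_le_div_iff₀ (habs_pos hr0 hr1 ξ) (habs_pos hs0 hs1 ξ)]
    exact abs_ineq_inc hr0 hrs hs1 (hwle ξ)
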